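/- arXiv:0803.2873 — 3 statements merged into one kernel-verified Lean document; each statement's English description precedes it below -/
import Mathlib

section
/- Let m, δ, ν ∈ ℝ with m − 2δ + 2ν < 0, let s₀ ∈ ℝ, and let g : [s₀, ∞) → ℝ be measurable with ∫_{s₀}^∞ g(s)² e^{(m−2δ)s} ds < ∞. Define w(s) := ∫_{s₀}^s e^{ν(s−σ)} g(σ) dσ for s ≥ s₀. Then ∫_{s₀}^∞ w(s)² e^{(m−2δ)s} ds ≤ (4/(m−2δ+2ν)²) · ∫_{s₀}^∞ g(s)² e^{(m−2δ)s} ds. -/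
open MeasureTheory Real Set
open scoped ENNReal NNReal

private lemma lint_exp_Ioi {b : ℝ} (hb : 0 < b) (a : ℝ) :
    ∫⁻ s in Ioi a, ENNReal.ofReal (Real.exp (-b * (s - a))) = ENNReal.ofReal (1 / b) := by
  have heq : ∀ s : ℝ, Real.exp (-b * (s - a)) = Real.exp (b * a) * Real.exp (-(b * s)) := by
    intro s; rw [← Real.exp_add]; ring_nf
  have hint : IntegrableOn (fun s => Real.exp (-b * (s - a))) (Ioi a) := by
    have h1 : IntegrableOn (fun s => Real.exp (b * a) * Real.exp (-b * s)) (Ioi a) :=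
      (exp_neg_integrableOn_Ioi a hb).const_mul _
    exact h1.congr_fun (fun x _ => by rw [heq]; ring_nf) measurableSet_Ioi
  rw [← ofReal_integral_eq_lintegral_ofReal hint
    (ae_of_all _ fun x => (Real.exp_pos _).le)]
  congr 1
  have h2 : (∫ s in Ioi a, Real.exp (-b * (s - a)))
      = Real.exp (b * a) * ∫ s in Ioi a, Real.exp (-(b * s)) := by
    rw [← MeasureTheory.integral_const_mul]
    exact setIntegral_congr_fun measurableSet_Ioi fun x _ => heq x
  have h3 : (∫ s in Ioi a, Real.exp (-(b * s)))
      = b⁻¹ * Real.exp (-(b * a)) := by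
    have := integral_comp_mul_left_Ioi (fun x => Real.exp (-x)) a hb
    simp only [smul_eq_mul] at this
    rw [this, integral_exp_neg_Ioi]
  rw [h2, h3]
  rw [show Real.exp (b*a) * (b⁻¹ * Real.exp (-(b*a))) = (Real.exp (b*a) * Real.exp (-(b*a))) * b⁻¹ by ring, ← Real.exp_add]
  simp [one_div]

private lemma lint_exp_Ioc {b : ℝ} (hb : 0 < b) {s₀ s : ℝ} (hs : s₀ ≤ s) :
    ∫⁻ σ in Ioc s₀ s, ENNReal.ofReal (Real.exp (-b * (s - σ))) ≤ ENNReal.ofReal (1 / b) := by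
  have hcont : Continuous (fun σ : ℝ => Real.exp (-b * (s - σ))) := by continuity
  have hint : IntegrableOn (fun σ => Real.exp (-b * (s - σ))) (Ioc s₀ s) :=
    hcont.integrableOn_Ioc
  rw [← ofReal_integral_eq_lintegral_ofReal hint
    (ae_of_all _ fun x => (Real.exp_pos _).le)]
  apply ENNReal.ofReal_le_ofReal
  have hderiv : ∀ σ ∈ uIcc s₀ s, HasDerivAt (fun σ => Real.exp (-b * (s - σ)) / b)
      (Real.exp (-b * (s - σ))) σ := by
    intro σ _
    have h1 : HasDerivAt (fun σ : ℝ => -b * (s - σ)) b σ := by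
      have : HasDerivAt (fun σ : ℝ => -(b * s) + b * σ) b σ := by
        simpa using ((hasDerivAt_id σ).const_mul b).const_add (-(b * s))
      exact this.congr_deriv rfl |>.congr_of_eventuallyEq (by filter_upwards with x; ring)
    have h2 := (h1.exp).div_const b
    convert h2 using 1 <;> try rfl
    field_simp
  have hFTC := intervalIntegral.integral_eq_sub_of_hasDerivAt hderiv
    (hcont.intervalIntegrable _ _)
  rw [← intervalIntegral.integral_of_le hs, hFTC]
  have h4 : Real.exp (-b * (s - s₀)) > 0 := Real.exp_pos _
  have h5 : Real.exp (-b * (s - s)) = 1 := by simp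
  rw [h5]
  rw [div_sub_div_same, div_le_div_iff₀ hb hb]
  nlinarith [h4]

private lemma volterra_step1 {b μ' ν : ℝ} (hb : 0 < b) (hrel : μ' + 2 * ν = -2 * b)
    {g : ℝ → ℝ} (hg : Measurable g) {s₀ s : ℝ} (hs : s₀ ≤ s) :
    ENNReal.ofReal ((∫ σ in s₀..s, Real.exp (ν * (s - σ)) * g σ) ^ 2 * Real.exp (μ' * s)) ≤
      ENNReal.ofReal (1 / b) *
        ∫⁻ σ in Ioc s₀ s,
          ENNReal.ofReal (Real.exp (-b * (s - σ))) *
            ENNReal.ofReal (g σ ^ 2 * Real.exp (μ' * σ)) := by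
  set I := ∫ σ in s₀..s, Real.exp (ν * (s - σ)) * g σ with hI
  set φ : ℝ → ℝ := fun σ => Real.exp (-b * (s - σ)) * (g σ * Real.exp (μ' * σ / 2)) with hφ
  set u : ℝ → ℝ≥0∞ := fun σ => ENNReal.ofReal (Real.exp (-b * (s - σ))) with hu
  set v : ℝ → ℝ≥0∞ := fun σ => ENNReal.ofReal (g σ ^ 2 * Real.exp (μ' * σ)) with hv
  have hu_meas : Measurable u :=
    ENNReal.measurable_ofReal.comp (Real.continuous_exp.comp (by continuity)).measurable
  have hv_meas : Measurable v :=
    ENNReal.measurable_ofReal.comp ((hg.pow_const 2).mul (by continuity : Continuous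
      fun σ : ℝ => Real.exp (μ' * σ)).measurable)
  -- I * exp(μ' s / 2) = ∫ φ
  have hJ : I * Real.exp (μ' * s / 2) = ∫ σ in s₀..s, φ σ := by
    rw [hI, ← intervalIntegral.integral_mul_const]
    apply intervalIntegral.integral_congr
    intro σ _
    have hexp : Real.exp (ν * (s - σ)) * Real.exp (μ' * s / 2)
        = Real.exp (-b * (s - σ)) * Real.exp (μ' * σ / 2) := by
      rw [← Real.exp_add, ← Real.exp_add]
      congr 1
      linear_combination ((s - σ) / 2) * hrel
    simp only [hφ]
    calc Real.exp (ν * (s - σ)) * g σ * Real.exp (μ' * s / 2)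
        = (Real.exp (ν * (s - σ)) * Real.exp (μ' * s / 2)) * g σ := by ring
      _ = (Real.exp (-b * (s - σ)) * Real.exp (μ' * σ / 2)) * g σ := by rw [hexp]
      _ = Real.exp (-b * (s - σ)) * (g σ * Real.exp (μ' * σ / 2)) := by ring
  -- the key square rewriting
  have hsq : I ^ 2 * Real.exp (μ' * s) = (∫ σ in s₀..s, φ σ) ^ 2 := by
    rw [← hJ, mul_pow]
    congr 1
    rw [sq, ← Real.exp_add]
    ring_nf
  rw [hsq]
  -- bound by lintegral of nnnorm
  have h1 : ENNReal.ofReal ((∫ σ in s₀..s, φ σ) ^ 2)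
      ≤ (∫⁻ σ in Ioc s₀ s, (‖φ σ‖₊ : ℝ≥0∞)) ^ 2 := by
    rw [← sq_abs, ENNReal.ofReal_pow (abs_nonneg _), ← Real.enorm_eq_ofReal_abs]
    gcongr
    rw [intervalIntegral.integral_of_le hs]
    exact enorm_integral_le_lintegral_enorm _
  refine h1.trans ?_
  have hrpow_sqrt : ∀ x : ℝ, 0 ≤ x → x ^ (2⁻¹ : ℝ) = Real.sqrt x := by
    intro x hx; rw [Real.sqrt_eq_rpow]; norm_num
  -- pointwise identity for Cauchy-Schwarz
  have hptw : ∀ σ, (‖φ σ‖₊ : ℝ≥0∞) = (u σ) ^ (2⁻¹ : ℝ) * (u σ * v σ) ^ (2⁻¹ : ℝ) := by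
    intro σ
    have he : (0:ℝ) < Real.exp (-b * (s - σ)) := Real.exp_pos _
    have hvnn : (0:ℝ) ≤ g σ ^ 2 * Real.exp (μ' * σ) := by positivity
    simp only [hu, hv, ← enorm_eq_nnnorm, Real.enorm_eq_ofReal_abs]
    rw [← ENNReal.ofReal_mul he.le,
      ENNReal.ofReal_rpow_of_nonneg he.le (by norm_num),
      ENNReal.ofReal_rpow_of_nonneg (mul_nonneg he.le hvnn) (by norm_num),
      ← ENNReal.ofReal_mul (by positivity)]
    congr 1
    rw [hrpow_sqrt _ he.le, hrpow_sqrt _ (mul_nonneg he.le hvnn), ← Real.sqrt_mul he.le]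
    have hEsq : Real.exp (μ' * σ / 2) ^ 2 = Real.exp (μ' * σ) := by
      rw [sq, ← Real.exp_add]; ring_nf
    have hsq2 : Real.exp (-b * (s - σ)) *
          (Real.exp (-b * (s - σ)) * (g σ ^ 2 * Real.exp (μ' * σ)))
        = (Real.exp (-b * (s - σ)) * (|g σ| * Real.exp (μ' * σ / 2))) ^ 2 := by
      rw [mul_pow, mul_pow, sq_abs, hEsq]; ring
    rw [hsq2, Real.sqrt_sq (by positivity)]
    simp only [hφ, abs_mul, abs_of_pos he, abs_of_pos (Real.exp_pos (μ' * σ / 2))]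
  -- Cauchy-Schwarz (Hölder with p = q = 2)
  have hconj : Real.HolderConjugate 2 2 := Real.HolderConjugate.two_two
  have hCS := ENNReal.lintegral_mul_le_Lp_mul_Lq (volume.restrict (Ioc s₀ s)) hconj
    ((hu_meas.pow measurable_const).aemeasurable :
      AEMeasurable (fun σ => u σ ^ (2⁻¹ : ℝ)) _)
    (((hu_meas.mul hv_meas).pow measurable_const).aemeasurable :
      AEMeasurable (fun σ => (u σ * v σ) ^ (2⁻¹ : ℝ)) _)
  have hhalf : ∀ x : ℝ≥0∞, (x ^ (2⁻¹ : ℝ)) ^ (2 : ℝ) = x := by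
    intro x; rw [← ENNReal.rpow_mul]; norm_num
  simp only [Pi.mul_apply, hhalf] at hCS
  have hCS2 : (∫⁻ σ in Ioc s₀ s, (‖φ σ‖₊ : ℝ≥0∞))
      ≤ (∫⁻ σ in Ioc s₀ s, u σ) ^ (2⁻¹ : ℝ) * (∫⁻ σ in Ioc s₀ s, u σ * v σ) ^ (2⁻¹ : ℝ) := by
    calc (∫⁻ σ in Ioc s₀ s, (‖φ σ‖₊ : ℝ≥0∞))
        = ∫⁻ σ in Ioc s₀ s, (u σ) ^ (2⁻¹ : ℝ) * (u σ * v σ) ^ (2⁻¹ : ℝ) := by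
          exact lintegral_congr fun σ => hptw σ
      _ ≤ (∫⁻ σ in Ioc s₀ s, u σ) ^ ((1:ℝ)/2) * (∫⁻ σ in Ioc s₀ s, u σ * v σ) ^ ((1:ℝ)/2) := hCS
      _ = _ := by norm_num
  calc (∫⁻ σ in Ioc s₀ s, (‖φ σ‖₊ : ℝ≥0∞)) ^ 2
      ≤ ((∫⁻ σ in Ioc s₀ s, u σ) ^ (2⁻¹ : ℝ) * (∫⁻ σ in Ioc s₀ s, u σ * v σ) ^ (2⁻¹ : ℝ)) ^ 2 := by
        gcongr
    _ = (∫⁻ σ in Ioc s₀ s, u σ) * (∫⁻ σ in Ioc s₀ s, u σ * v σ) := by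
        rw [mul_pow, ← ENNReal.rpow_natCast ((∫⁻ σ in Ioc s₀ s, u σ) ^ (2⁻¹ : ℝ)) 2,
          ← ENNReal.rpow_natCast ((∫⁻ σ in Ioc s₀ s, u σ * v σ) ^ (2⁻¹ : ℝ)) 2,
          ← ENNReal.rpow_mul, ← ENNReal.rpow_mul]
        norm_num
    _ ≤ ENNReal.ofReal (1 / b) * ∫⁻ σ in Ioc s₀ s, u σ * v σ := by
        exact mul_le_mul_left (lint_exp_Ioc hb hs) _


/-- Weighted `L²` bound for the Volterra-type solution `w(s) = ∫_{s₀}^s e^{ν(s-σ)} g(σ) dσ`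
of `w' = ν w + g`, when `m - 2δ + 2ν < 0` (proof of Lemma 2.2 of the paper). -/
theorem volterra_weighted_bound_from_below (m δ ν : ℝ) (h : m - 2 * δ + 2 * ν < 0)
    (s₀ : ℝ) (g : ℝ → ℝ) (hg : Measurable g)
    (hfin : ∫⁻ s in Ici s₀, ENNReal.ofReal (g s ^ 2 * Real.exp ((m - 2 * δ) * s)) < ⊤) :
    ∫⁻ s in Ici s₀,
        ENNReal.ofReal ((∫ σ in s₀..s, Real.exp (ν * (s - σ)) * g σ) ^ 2 *
          Real.exp ((m - 2 * δ) * s)) ≤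
      ENNReal.ofReal (4 / (m - 2 * δ + 2 * ν) ^ 2) *
        ∫⁻ s in Ici s₀, ENNReal.ofReal (g s ^ 2 * Real.exp ((m - 2 * δ) * s)) := by
  clear hfin
  have hc : m - 2 * δ + 2 * ν ≠ 0 := ne_of_lt h
  set b : ℝ := -(m - 2 * δ + 2 * ν) / 2 with hbdef
  have hb : 0 < b := by rw [hbdef]; linarith
  have hrel : (m - 2 * δ) + 2 * ν = -2 * b := by rw [hbdef]; ring
  set F : ℝ → ℝ≥0∞ := fun σ => ENNReal.ofReal (g σ ^ 2 * Real.exp ((m - 2 * δ) * σ)) with hF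
  set K : ℝ → ℝ → ℝ≥0∞ := fun s σ => ENNReal.ofReal (Real.exp (-b * (s - σ))) with hK
  set H : ℝ → ℝ → ℝ≥0∞ := fun s σ => if s₀ < σ ∧ σ ≤ s then K s σ * F σ else 0 with hH
  have hK_meas : Measurable (fun p : ℝ × ℝ => K p.1 p.2) :=
    ENNReal.measurable_ofReal.comp (Real.continuous_exp.comp
      (continuous_const.mul (continuous_fst.sub continuous_snd))).measurable
  have hF_meas : Measurable F :=
    ENNReal.measurable_ofReal.comp ((hg.pow_const 2).mul
      (Real.continuous_exp.comp (continuous_const.mul continuous_id)).measurable)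
  have hHmeas : Measurable (Function.uncurry H) := by
    show Measurable fun p : ℝ × ℝ => if s₀ < p.2 ∧ p.2 ≤ p.1 then K p.1 p.2 * F p.2 else 0
    apply Measurable.ite
    · exact (measurable_snd measurableSet_Ioi).inter
        (measurableSet_le measurable_snd measurable_fst)
    · exact hK_meas.mul (hF_meas.comp measurable_snd)
    · exact measurable_const
  have hinner_meas : Measurable fun s => ∫⁻ σ, H s σ := hHmeas.lintegral_prod_right'
  -- rewrite inner set-lintegral as full lintegral of H
  have hIoc : ∀ s, ∫⁻ σ in Ioc s₀ s, K s σ * F σ = ∫⁻ σ, H s σ := by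
    intro s
    rw [← lintegral_indicator measurableSet_Ioc]
    refine lintegral_congr fun σ => ?_
    by_cases hσ : σ ∈ Ioc s₀ s
    · rw [indicator_of_mem hσ]; simp only [mem_Ioc] at hσ; simp only [hH, if_pos hσ]
    · rw [indicator_of_notMem hσ]; simp only [mem_Ioc] at hσ; simp only [hH, if_neg hσ]
  calc ∫⁻ s in Ici s₀,
        ENNReal.ofReal ((∫ σ in s₀..s, Real.exp (ν * (s - σ)) * g σ) ^ 2 *
          Real.exp ((m - 2 * δ) * s))
      ≤ ∫⁻ s in Ici s₀, ENNReal.ofReal (1 / b) * ∫⁻ σ, H s σ := by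
        refine setLIntegral_mono (measurable_const.mul hinner_meas) fun s hs => ?_
        rw [← hIoc s]
        exact volterra_step1 hb hrel hg hs
    _ = ENNReal.ofReal (1 / b) * ∫⁻ s in Ici s₀, ∫⁻ σ, H s σ :=
        lintegral_const_mul _ hinner_meas
    _ = ENNReal.ofReal (1 / b) * ∫⁻ σ, ∫⁻ s in Ici s₀, H s σ := by
        rw [lintegral_lintegral_swap hHmeas.aemeasurable]
    _ ≤ ENNReal.ofReal (1 / b) *
          ∫⁻ σ, (Ioi s₀).indicator (fun σ => ENNReal.ofReal (1 / b) * F σ) σ := by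
        gcongr with σ
        by_cases hσ : s₀ < σ
        · rw [indicator_of_mem (mem_Ioi.2 hσ)]
          have hHle : ∀ s, H s σ ≤ (Ici σ).indicator (fun s => K s σ) s * F σ := by
            intro s
            by_cases hs' : σ ≤ s
            · simp only [hH, if_pos (⟨hσ, hs'⟩ : s₀ < σ ∧ σ ≤ s)]
              rw [indicator_of_mem (mem_Ici.2 hs')]
            · simp only [hH, if_neg (fun hcon : s₀ < σ ∧ σ ≤ s => hs' hcon.2)]
              exact zero_le
          calc ∫⁻ s in Ici s₀, H s σ
              ≤ ∫⁻ s in Ici s₀, (Ici σ).indicator (fun s => K s σ) s * F σ :=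
                lintegral_mono hHle
            _ = (∫⁻ s in Ici s₀, (Ici σ).indicator (fun s => K s σ) s) * F σ :=
                lintegral_mul_const' _ _ ENNReal.ofReal_ne_top
            _ ≤ (∫⁻ s in Ici σ, K s σ) * F σ := by
                refine mul_le_mul_left ?_ _
                rw [lintegral_indicator measurableSet_Ici, Measure.restrict_restrict
                  measurableSet_Ici]
                exact lintegral_mono_set inter_subset_left
            _ = ENNReal.ofReal (1 / b) * F σ := by
                rw [← restrict_Ioi_eq_restrict_Ici, lint_exp_Ioi hb σ]
        · rw [indicator_of_notMem (by simpa using hσ)]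
          have hz : ∀ s, H s σ = 0 := fun s => by
            simp only [hH, if_neg (fun hcon : s₀ < σ ∧ σ ≤ s => hσ hcon.1)]
          simp only [hz, lintegral_zero, le_refl]
    _ = ENNReal.ofReal (1 / b) * (ENNReal.ofReal (1 / b) * ∫⁻ σ in Ioi s₀, F σ) := by
        rw [lintegral_indicator measurableSet_Ioi, lintegral_const_mul _ hF_meas]
    _ ≤ ENNReal.ofReal (1 / b) * (ENNReal.ofReal (1 / b) * ∫⁻ σ in Ici s₀, F σ) := by
        gcongr
        exact Ioi_subset_Ici_self
    _ = ENNReal.ofReal (4 / (m - 2 * δ + 2 * ν) ^ 2) * ∫⁻ σ in Ici s₀, F σ := by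
        rw [← mul_assoc, ← ENNReal.ofReal_mul (by positivity)]
        congr 2
        have hbb : b * b = (m - 2 * δ + 2 * ν) ^ 2 / 4 := by rw [hbdef]; ring
        rw [div_mul_div_comm, one_mul, hbb, one_div_div]
end

section
/- Let m, δ, ν ∈ ℝ with m − 2δ + 2ν > 0, let s₀ ∈ ℝ, and let g : [s₀, ∞) → ℝ be measurable with ∫_{s₀}^∞ g(s)² e^{(m−2δ)s} ds < ∞. Then for every s ≥ s₀ the integral w(s) := ∫_s^∞ e^{ν(s−σ)} g(σ) dσ converges absolutely, and ∫_{s₀}^∞ w(s)² e^{(m−2δ)s} ds ≤ (4/(m−2δ+2ν)²) · ∫_{s₀}^∞ g(s)² e^{(m−2δ)s} ds. -/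
open MeasureTheory Real Set
open scoped ENNReal NNReal

lemma exp_decay_integrableOn (β c : ℝ) (hβ : 0 < β) :
    IntegrableOn (fun x : ℝ => Real.exp (-(β * (x - c)))) (Ioi c) := by
  have : (fun x : ℝ => Real.exp (-(β * (x - c)))) =
      fun x : ℝ => Real.exp (β * c) * Real.exp (-β * x) := by
    ext x; rw [← Real.exp_add]; ring_nf
  rw [this]
  exact (exp_neg_integrableOn_Ioi c hβ).const_mul _

lemma lintegral_exp_decay_Ici (β c : ℝ) (hβ : 0 < β) :
    ∫⁻ x in Ici c, ENNReal.ofReal (Real.exp (-(β * (x - c)))) = ENNReal.ofReal (1 / β) := by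
  rw [← Measure.restrict_congr_set Ioi_ae_eq_Ici]
  rw [← ofReal_integral_eq_lintegral_ofReal (exp_decay_integrableOn β c hβ)
    (ae_of_all _ fun x => (Real.exp_pos _).le)]
  congr 1
  have hderiv : ∀ x ∈ Ici c,
      HasDerivAt (fun x => -(Real.exp (-(β * (x - c))) / β)) (Real.exp (-(β * (x - c)))) x := by
    intro x _
    have h1 : HasDerivAt (fun x : ℝ => -(β * (x - c))) (-β) x := by
      simpa using (((hasDerivAt_id x).sub_const c).const_mul β).fun_neg
    have h2 := (h1.exp.div_const β).fun_neg
    convert h2 using 1 <;> first | rfl | field_simp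
  have htend : Filter.Tendsto (fun x => -(Real.exp (-(β * (x - c))) / β)) Filter.atTop (nhds 0) := by
    have h1 : Filter.Tendsto (fun x : ℝ => -(β * (x - c))) Filter.atTop Filter.atBot := by
      have h0 : Filter.Tendsto (fun x : ℝ => -β * x) Filter.atTop Filter.atBot :=
        Filter.tendsto_id.const_mul_atTop_of_neg (by linarith)
      exact (Filter.tendsto_atBot_add_const_right _ (β * c) h0).congr (fun x => by ring)
    have := (Real.tendsto_exp_atBot.comp h1).div_const β |>.neg
    simpa using this
  rw [integral_Ioi_of_hasDerivAt_of_tendsto' hderiv (exp_decay_integrableOn β c hβ) htend]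
  simp [hβ.ne']

lemma lintegral_exp_decay_Iic (β c : ℝ) (hβ : 0 < β) :
    ∫⁻ x in Iic c, ENNReal.ofReal (Real.exp (-(β * (c - x)))) = ENNReal.ofReal (1 / β) := by
  have hemb : MeasurableEmbedding (fun x : ℝ => -x) :=
    (Homeomorph.neg ℝ).measurableEmbedding
  have hmp : MeasurePreserving (fun x : ℝ => -x) volume volume :=
    Measure.measurePreserving_neg volume
  have himg : (fun x : ℝ => -x) '' (Ici (-c)) = Iic c := by
    ext x
    simp only [Set.mem_image, Set.mem_Ici, Set.mem_Iic]
    constructor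
    · rintro ⟨y, hy, rfl⟩; linarith
    · intro hx; exact ⟨-x, by linarith, by ring⟩
  have key := hmp.setLIntegral_comp_emb hemb
    (fun x => ENNReal.ofReal (Real.exp (-(β * (c - x))))) (Ici (-c))
  rw [himg] at key
  rw [← key]
  have heq : ∀ x : ℝ, Real.exp (-(β * (c - (-x)))) = Real.exp (-(β * (x - (-c)))) := by
    intro x; ring_nf
  simp_rw [heq]
  exact lintegral_exp_decay_Ici β (-c) hβ

lemma holder_step (β s : ℝ) (hβ : 0 < β) (φ : ℝ → ℝ≥0∞) (hφ : Measurable φ) :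
    (∫⁻ σ in Ici s, ENNReal.ofReal (Real.exp (-(β * (σ - s)))) * φ σ) ^ 2 ≤
      ENNReal.ofReal (1 / β) *
        ∫⁻ σ in Ici s, ENNReal.ofReal (Real.exp (-(β * (σ - s)))) * (φ σ) ^ 2 := by
  set u : ℝ → ℝ≥0∞ := fun σ => ENNReal.ofReal (Real.exp (-(β * (σ - s)) / 2)) with hu
  set v : ℝ → ℝ≥0∞ := fun σ => ENNReal.ofReal (Real.exp (-(β * (σ - s)) / 2)) * φ σ with hv
  have hu_meas : Measurable u := by
    exact ENNReal.measurable_ofReal.comp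
      (Real.measurable_exp.comp (((measurable_id.sub_const s).const_mul β).neg.div_const 2))
  have hv_meas : Measurable v := hu_meas.mul hφ
  have hsplit : ∀ σ, ENNReal.ofReal (Real.exp (-(β * (σ - s)))) * φ σ = u σ * v σ := by
    intro σ
    simp only [hu, hv, ← mul_assoc, ← ENNReal.ofReal_mul (Real.exp_pos _).le, ← Real.exp_add]
    norm_num
  have hconj : Real.HolderConjugate 2 2 := Real.HolderConjugate.two_two
  have H := ENNReal.lintegral_mul_le_Lp_mul_Lq (volume.restrict (Ici s)) hconj
    hu_meas.aemeasurable hv_meas.aemeasurable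
  have hu2 : ∀ σ, u σ ^ (2:ℝ) = ENNReal.ofReal (Real.exp (-(β * (σ - s)))) := by
    intro σ
    rw [hu, ENNReal.ofReal_rpow_of_pos (Real.exp_pos _), ← Real.exp_mul]
    norm_num
  have hv2 : ∀ σ, v σ ^ (2:ℝ) =
      ENNReal.ofReal (Real.exp (-(β * (σ - s)))) * φ σ ^ 2 := by
    intro σ
    rw [hv, ENNReal.mul_rpow_of_nonneg _ _ (by norm_num : (0:ℝ) ≤ 2), hu2 σ]
    congr 1
    rw [← ENNReal.rpow_natCast (φ σ) 2]
    norm_num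
  calc (∫⁻ σ in Ici s, ENNReal.ofReal (Real.exp (-(β * (σ - s)))) * φ σ) ^ 2
      = (∫⁻ σ in Ici s, (u * v) σ) ^ 2 := by
        congr 1; exact lintegral_congr fun σ => hsplit σ
    _ ≤ ((∫⁻ σ in Ici s, u σ ^ (2:ℝ)) ^ (1/(2:ℝ)) *
          (∫⁻ σ in Ici s, v σ ^ (2:ℝ)) ^ (1/(2:ℝ))) ^ 2 := by
        exact pow_le_pow_left₀ zero_le H 2
    _ = (∫⁻ σ in Ici s, u σ ^ (2:ℝ)) * (∫⁻ σ in Ici s, v σ ^ (2:ℝ)) := by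
        rw [mul_pow, ← ENNReal.rpow_natCast (_ ^ (1/(2:ℝ))) 2,
          ← ENNReal.rpow_natCast (_ ^ (1/(2:ℝ))) 2, ← ENNReal.rpow_mul, ← ENNReal.rpow_mul]
        norm_num
    _ = ENNReal.ofReal (1 / β) *
          ∫⁻ σ in Ici s, ENNReal.ofReal (Real.exp (-(β * (σ - s)))) * (φ σ) ^ 2 := by
        congr 1
        · rw [lintegral_congr fun σ => hu2 σ]
          exact lintegral_exp_decay_Ici β s hβ
        · exact lintegral_congr fun σ => hv2 σ

/-- Weighted `L²` bound for the solution `w(s) = ∫_s^∞ e^{ν(s-σ)} g(σ) dσ` of `w' = ν w - g`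
obtained by integrating from `+∞`, when `m - 2δ + 2ν > 0` (proof of Lemma 2.2 of the paper).
The integral defining `w` converges absolutely for every `s ≥ s₀`. -/
theorem volterra_weighted_bound_from_infinity (m δ ν : ℝ) (h : 0 < m - 2 * δ + 2 * ν)
    (s₀ : ℝ) (g : ℝ → ℝ) (hg : Measurable g)
    (hfin : ∫⁻ s in Ici s₀, ENNReal.ofReal (g s ^ 2 * Real.exp ((m - 2 * δ) * s)) < ⊤) :
    (∀ s ≥ s₀, IntegrableOn (fun σ => Real.exp (ν * (s - σ)) * g σ) (Ici s)) ∧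
      ∫⁻ s in Ici s₀,
          ENNReal.ofReal ((∫ σ in Ici s, Real.exp (ν * (s - σ)) * g σ) ^ 2 *
            Real.exp ((m - 2 * δ) * s)) ≤
        ENNReal.ofReal (4 / (m - 2 * δ + 2 * ν) ^ 2) *
          ∫⁻ s in Ici s₀, ENNReal.ofReal (g s ^ 2 * Real.exp ((m - 2 * δ) * s)) := by
  set a : ℝ := m - 2 * δ with ha
  set β : ℝ := (m - 2 * δ + 2 * ν) / 2 with hb
  have hβ : 0 < β := by rw [hb]; linarith
  -- the weighted function
  set φ : ℝ → ℝ≥0∞ := fun σ => ENNReal.ofReal (|g σ| * Real.exp (a * σ / 2)) with hφ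
  have hφ_meas : Measurable φ :=
    ENNReal.measurable_ofReal.comp
      ((hg.abs.mul (Real.measurable_exp.comp ((measurable_id.const_mul a).div_const 2))))
  have hφsq : ∀ σ, φ σ ^ 2 = ENNReal.ofReal (g σ ^ 2 * Real.exp (a * σ)) := by
    intro σ
    rw [hφ, ← ENNReal.ofReal_pow (by positivity)]
    congr 1
    rw [mul_pow, sq_abs, ← Real.exp_nat_mul]
    ring_nf
  -- kernel identity
  have hker : ∀ s σ : ℝ,
      Real.exp (ν * (s - σ)) * |g σ| * Real.exp (a * s / 2) =
        Real.exp (-(β * (σ - s))) * (|g σ| * Real.exp (a * σ / 2)) := by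
    intro s σ
    have : Real.exp (ν * (s - σ)) * Real.exp (a * s / 2) =
        Real.exp (-(β * (σ - s))) * Real.exp (a * σ / 2) := by
      rw [← Real.exp_add, ← Real.exp_add]
      congr 1
      rw [hb]; ring
    calc Real.exp (ν * (s - σ)) * |g σ| * Real.exp (a * s / 2)
        = Real.exp (ν * (s - σ)) * Real.exp (a * s / 2) * |g σ| := by ring
      _ = Real.exp (-(β * (σ - s))) * Real.exp (a * σ / 2) * |g σ| := by rw [this]
      _ = Real.exp (-(β * (σ - s))) * (|g σ| * Real.exp (a * σ / 2)) := by ring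
  -- total mass of weighted g
  set I : ℝ≥0∞ := ∫⁻ s in Ici s₀, ENNReal.ofReal (g s ^ 2 * Real.exp ((m - 2 * δ) * s)) with hI
  have hIφ : ∀ s : ℝ, (∫⁻ σ in Ici s, φ σ ^ 2) =
      ∫⁻ σ in Ici s, ENNReal.ofReal (g σ ^ 2 * Real.exp ((m - 2 * δ) * σ)) :=
    fun s => lintegral_congr fun σ => hφsq σ
  -- the C-functional
  set C : ℝ → ℝ≥0∞ :=
    fun s => ∫⁻ σ in Ici s, ENNReal.ofReal (Real.exp (-(β * (σ - s)))) * φ σ ^ 2 with hC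
  have hCle : ∀ s ≥ s₀, C s ≤ I := by
    intro s hs
    have h1 : C s ≤ ∫⁻ σ in Ici s, φ σ ^ 2 := by
      rw [hC]
      refine lintegral_mono_ae ((ae_restrict_iff' measurableSet_Ici).2 (ae_of_all _ ?_))
      intro σ hσ
      calc ENNReal.ofReal (Real.exp (-(β * (σ - s)))) * φ σ ^ 2
          ≤ 1 * φ σ ^ 2 := by
            refine mul_le_mul_of_nonneg_right (ENNReal.ofReal_le_one.2 ?_) zero_le
            rw [Real.exp_le_one_iff]
            have : (0:ℝ) ≤ σ - s := by simpa using hσ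
            nlinarith
        _ = φ σ ^ 2 := one_mul _
    refine h1.trans ?_
    rw [hIφ s, hI]
    exact lintegral_mono_set (Ici_subset_Ici.2 hs)
  have hIfin : I < ⊤ := hfin
  -- the basic Hoelder bound for the kernel integral against φ
  have hX : ∀ s : ℝ,
      (∫⁻ σ in Ici s, ENNReal.ofReal (Real.exp (-(β * (σ - s)))) * φ σ) ^ 2 ≤
        ENNReal.ofReal (1 / β) * C s := fun s => holder_step β s hβ φ hφ_meas
  -- Part 1: integrability
  have hint : ∀ s ≥ s₀, IntegrableOn (fun σ => Real.exp (ν * (s - σ)) * g σ) (Ici s) := by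
    intro s hs
    refine ⟨((Real.measurable_exp.comp
      ((measurable_const.sub measurable_id).const_mul ν)).mul hg).aestronglyMeasurable, ?_⟩
    rw [hasFiniteIntegral_iff_norm]
    have hpt : ∀ σ : ℝ, ENNReal.ofReal ‖Real.exp (ν * (s - σ)) * g σ‖ =
        ENNReal.ofReal (Real.exp (-(a * s / 2))) *
          (ENNReal.ofReal (Real.exp (-(β * (σ - s)))) * φ σ) := by
      intro σ
      rw [hφ, ← ENNReal.ofReal_mul (Real.exp_pos _).le,
        ← ENNReal.ofReal_mul (Real.exp_pos _).le]
      congr 1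
      rw [Real.norm_eq_abs, abs_mul, Real.abs_exp, ← hker s σ,
        show Real.exp (-(a * s / 2)) * (Real.exp (ν * (s - σ)) * |g σ| * Real.exp (a * s / 2)) =
          (Real.exp (-(a * s / 2)) * Real.exp (a * s / 2)) * (Real.exp (ν * (s - σ)) * |g σ|)
          from by ring, ← Real.exp_add]
      simp
    simp_rw [hpt]
    rw [lintegral_const_mul' _ _ ENNReal.ofReal_ne_top]
    refine ENNReal.mul_lt_top ENNReal.ofReal_lt_top ?_
    set X : ℝ≥0∞ := ∫⁻ σ in Ici s, ENNReal.ofReal (Real.exp (-(β * (σ - s)))) * φ σ with hXdef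
    have hX2 : X ^ 2 < ⊤ := by
      refine lt_of_le_of_lt (hX s) ?_
      exact ENNReal.mul_lt_top ENNReal.ofReal_lt_top (lt_of_le_of_lt (hCle s hs) hIfin)
    rw [lt_top_iff_ne_top]
    intro hXtop
    rw [hXtop] at hX2
    simp [pow_two] at hX2
  refine ⟨hint, ?_⟩
  -- pointwise bound for the weighted square of w
  have hpoint : ∀ s : ℝ,
      ENNReal.ofReal ((∫ σ in Ici s, Real.exp (ν * (s - σ)) * g σ) ^ 2 *
        Real.exp ((m - 2 * δ) * s)) ≤ ENNReal.ofReal (1 / β) * C s := by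
    intro s
    set W : ℝ := ∫ σ in Ici s, Real.exp (ν * (s - σ)) * g σ with hW
    have e1 : W ^ 2 * Real.exp ((m - 2 * δ) * s) = (|W| * Real.exp (a * s / 2)) ^ 2 := by
      rw [mul_pow, sq_abs, ← Real.exp_nat_mul]
      ring_nf
      rw [ha]; ring_nf
    rw [e1, ENNReal.ofReal_pow (by positivity),
      ENNReal.ofReal_mul (abs_nonneg _)]
    have e2 : ENNReal.ofReal |W| ≤
        ∫⁻ σ in Ici s, ENNReal.ofReal (Real.exp (ν * (s - σ)) * |g σ|) := by
      rw [← Real.enorm_eq_ofReal_abs]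
      refine (enorm_integral_le_lintegral_enorm _).trans ?_
      refine le_of_eq (lintegral_congr fun σ => ?_)
      rw [Real.enorm_eq_ofReal_abs, abs_mul, Real.abs_exp]
    have e3 : (∫⁻ σ in Ici s, ENNReal.ofReal (Real.exp (ν * (s - σ)) * |g σ|)) *
        ENNReal.ofReal (Real.exp (a * s / 2)) =
        ∫⁻ σ in Ici s, ENNReal.ofReal (Real.exp (-(β * (σ - s)))) * φ σ := by
      have hmb : Measurable (fun σ : ℝ => ENNReal.ofReal (Real.exp (ν * (s - σ)) * |g σ|)) := by
        fun_prop
      rw [← lintegral_mul_const'' _ hmb.aemeasurable]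
      refine lintegral_congr fun σ => ?_
      rw [hφ, ← ENNReal.ofReal_mul (by positivity), ← ENNReal.ofReal_mul (by positivity)]
      congr 1
      exact hker s σ
    calc (ENNReal.ofReal |W| * ENNReal.ofReal (Real.exp (a * s / 2))) ^ 2
        ≤ ((∫⁻ σ in Ici s, ENNReal.ofReal (Real.exp (ν * (s - σ)) * |g σ|)) *
            ENNReal.ofReal (Real.exp (a * s / 2))) ^ 2 := by
          exact pow_le_pow_left₀ zero_le (mul_le_mul_left e2 _) 2
      _ = (∫⁻ σ in Ici s, ENNReal.ofReal (Real.exp (-(β * (σ - s)))) * φ σ) ^ 2 := by rw [e3]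
      _ ≤ ENNReal.ofReal (1 / β) * C s := hX s
  -- Tonelli step
  set F : ℝ × ℝ → ℝ≥0∞ := fun p =>
    Set.indicator {q : ℝ × ℝ | q.1 ≤ q.2}
      (fun q => ENNReal.ofReal (Real.exp (-(β * (q.2 - q.1)))) * φ q.2 ^ 2) p with hF
  have hFmeas : Measurable F := by
    refine Measurable.indicator ?_ (measurableSet_le measurable_fst measurable_snd)
    refine Measurable.mul ?_ ((hφ_meas.comp measurable_snd).pow_const 2)
    fun_prop
  have hCF : ∀ s : ℝ, C s = ∫⁻ σ, F (s, σ) := by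
    intro s
    rw [hC]
    show ∫⁻ σ in Ici s, ENNReal.ofReal (Real.exp (-(β * (σ - s)))) * φ σ ^ 2 = _
    rw [← lintegral_indicator measurableSet_Ici _]
    refine lintegral_congr fun σ => ?_
    simp only [hF]
    by_cases hσ : s ≤ σ
    · rw [Set.indicator_of_mem (by exact hσ : σ ∈ Ici s),
        Set.indicator_of_mem (by exact hσ : ((s, σ) : ℝ × ℝ) ∈ {q : ℝ × ℝ | q.1 ≤ q.2})]
    · rw [Set.indicator_of_notMem (by exact hσ : σ ∉ Ici s),
        Set.indicator_of_notMem (by exact hσ : ((s, σ) : ℝ × ℝ) ∉ {q : ℝ × ℝ | q.1 ≤ q.2})]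
  have hswap : ∫⁻ s in Ici s₀, C s = ∫⁻ σ, ∫⁻ s in Ici s₀, F (s, σ) := by
    simp_rw [hCF]
    exact lintegral_lintegral_swap (hFmeas.aemeasurable)
  have hinner : ∀ σ : ℝ, (∫⁻ s in Ici s₀, F (s, σ)) ≤
      (Ici s₀).indicator (fun σ => ENNReal.ofReal (1 / β) * φ σ ^ 2) σ := by
    intro σ
    by_cases hσ : s₀ ≤ σ
    · rw [Set.indicator_of_mem (by exact hσ : σ ∈ Ici s₀)]
      have hFs : ∀ s : ℝ, F (s, σ) =
          (Iic σ).indicator (fun s => ENNReal.ofReal (Real.exp (-(β * (σ - s))))) s *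
            φ σ ^ 2 := by
        intro s
        simp only [hF]
        by_cases hs : s ≤ σ
        · rw [Set.indicator_of_mem (by exact hs : ((s, σ) : ℝ × ℝ) ∈ {q : ℝ × ℝ | q.1 ≤ q.2}),
            Set.indicator_of_mem (by exact hs : s ∈ Iic σ)]
        · rw [Set.indicator_of_notMem
            (by exact hs : ((s, σ) : ℝ × ℝ) ∉ {q : ℝ × ℝ | q.1 ≤ q.2}),
            Set.indicator_of_notMem (by exact hs : s ∉ Iic σ), zero_mul]
      calc ∫⁻ s in Ici s₀, F (s, σ)
          = (∫⁻ s in Ici s₀,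
              (Iic σ).indicator (fun s => ENNReal.ofReal (Real.exp (-(β * (σ - s))))) s) *
              φ σ ^ 2 := by
            rw [← lintegral_mul_const'' _ (((Measurable.indicator (by fun_prop)
              measurableSet_Iic)).aemeasurable)]
            exact lintegral_congr fun s => hFs s
        _ ≤ (∫⁻ s, (Iic σ).indicator
              (fun s => ENNReal.ofReal (Real.exp (-(β * (σ - s))))) s) * φ σ ^ 2 := by
            exact mul_le_mul_left (lintegral_mono' Measure.restrict_le_self le_rfl) _
        _ = ENNReal.ofReal (1 / β) * φ σ ^ 2 := by
            rw [lintegral_indicator measurableSet_Iic _, lintegral_exp_decay_Iic β σ hβ]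
    · rw [Set.indicator_of_notMem (by exact hσ : σ ∉ Ici s₀)]
      have : ∫⁻ s in Ici s₀, F (s, σ) = ∫⁻ s in Ici s₀, (0 : ℝ≥0∞) := by
        refine setLIntegral_congr_fun measurableSet_Ici (fun s hs => ?_)
        simp only [hF]
        rw [Set.indicator_of_notMem]
        intro hmem
        have : s ≤ σ := hmem
        have : s₀ ≤ σ := le_trans hs this
        exact hσ this
      rw [this, lintegral_zero]
  -- assemble
  calc ∫⁻ s in Ici s₀,
        ENNReal.ofReal ((∫ σ in Ici s, Real.exp (ν * (s - σ)) * g σ) ^ 2 *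
          Real.exp ((m - 2 * δ) * s))
      ≤ ∫⁻ s in Ici s₀, ENNReal.ofReal (1 / β) * C s := lintegral_mono fun s => hpoint s
    _ = ENNReal.ofReal (1 / β) * ∫⁻ s in Ici s₀, C s :=
        lintegral_const_mul' _ _ ENNReal.ofReal_ne_top
    _ = ENNReal.ofReal (1 / β) * ∫⁻ σ, ∫⁻ s in Ici s₀, F (s, σ) := by rw [hswap]
    _ ≤ ENNReal.ofReal (1 / β) *
          ∫⁻ σ, (Ici s₀).indicator (fun σ => ENNReal.ofReal (1 / β) * φ σ ^ 2) σ :=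
        mul_le_mul_right (lintegral_mono fun σ => hinner σ) _
    _ = ENNReal.ofReal (1 / β) * (ENNReal.ofReal (1 / β) * ∫⁻ σ in Ici s₀, φ σ ^ 2) := by
        rw [lintegral_indicator measurableSet_Ici _,
          lintegral_const_mul' _ _ ENNReal.ofReal_ne_top]
    _ = ENNReal.ofReal (4 / (m - 2 * δ + 2 * ν) ^ 2) *
          ∫⁻ s in Ici s₀, ENNReal.ofReal (g s ^ 2 * Real.exp ((m - 2 * δ) * s)) := by
        rw [hIφ s₀, ← mul_assoc, ← ENNReal.ofReal_mul (by positivity)]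
        congr 2
        have hne : m - 2 * δ + 2 * ν ≠ 0 := ne_of_gt h
        rw [hb]
        field_simp
        ring
end

section
/- Let n ≥ 2 be an integer and a ∈ ℝ, and let F : {x ∈ ℝ^n : |x| ≥ 1} → [0, ∞) be measurable with ∫_{|x| ≥ 1} F(x) |x|^{−2a} dx < ∞. Then liminf_{R → ∞} R^{n−2a} ∫_{S^{n−1}} F(Rω) dω = 0, where dω denotes the standard (n−1)-dimensional measure on the unit sphere S^{n−1} ⊂ ℝ^n. Equivalently, there is a sequence R_i → ∞ along which the sphere integrals ∫_{|x| = R_i} F dσ are o(R_i^{2a−1}). -/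
open MeasureTheory Filter Set Metric
open scoped ENNReal NNReal

/-- The weighted sphere integral `R^{n-2a} ∫_{S^{n-1}} F(Rω) dω`, valued in `[0,∞]`,
where `dω` is the standard measure on the unit sphere (the measure `volume.toSphere`). -/
noncomputable def sphereFlux (n : ℕ) (a : ℝ) (F : EuclideanSpace ℝ (Fin n) → ℝ)
    (R : ℝ) : ENNReal :=
  ENNReal.ofReal (R ^ ((n : ℝ) - 2 * a)) *
    ∫⁻ ω : Metric.sphere (0 : EuclideanSpace ℝ (Fin n)) 1,
      ENNReal.ofReal (F (R • (ω : EuclideanSpace ℝ (Fin n))))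
      ∂((volume : Measure (EuclideanSpace ℝ (Fin n))).toSphere)

lemma lintegral_inv_Ioi_eq_top {M : ℝ} (hM : 0 < M) :
    ∫⁻ r in Set.Ioi M, ENNReal.ofReal r⁻¹ = ⊤ := by
  by_contra h
  have hnonneg : 0 ≤ᵐ[volume.restrict (Set.Ioi M)] fun r : ℝ => r⁻¹ := by
    filter_upwards [ae_restrict_mem measurableSet_Ioi] with r hr
    exact inv_nonneg.2 (hM.trans hr).le
  have hint : IntegrableOn (fun r : ℝ => r⁻¹) (Set.Ioi M) := by
    refine ⟨measurable_inv.aestronglyMeasurable, ?_⟩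
    rw [hasFiniteIntegral_iff_ofReal hnonneg]
    exact lt_top_iff_ne_top.2 h
  have h2 : IntegrableOn (fun x : ℝ => x ^ (-1 : ℝ)) (Set.Ioi M) := by
    refine hint.congr_fun (fun x hx => ?_) measurableSet_Ioi
    rw [Real.rpow_neg_one]
  rw [integrableOn_Ioi_rpow_iff hM] at h2
  linarith

/-- **Pigeonhole for weighted flux integrals** (core of Lemma 3.2 of the paper): if
`F ≥ 0` satisfies `∫_{|x| ≥ 1} F(x)|x|^{-2a} dx < ∞`, then
`liminf_{R → ∞} R^{n-2a} ∫_{S^{n-1}} F(Rω) dω = 0`; equivalently there is a sequence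
`R_i → ∞` along which these weighted sphere integrals tend to `0`. -/
theorem flux_liminf_zero (n : ℕ) (hn : 2 ≤ n) (a : ℝ)
    (F : EuclideanSpace ℝ (Fin n) → ℝ) (hF : Measurable F) (hF0 : ∀ x, 0 ≤ F x)
    (hfin : ∫⁻ x in {x : EuclideanSpace ℝ (Fin n) | 1 ≤ ‖x‖},
      ENNReal.ofReal (F x * ‖x‖ ^ (-(2 * a))) < ⊤) :
    liminf (sphereFlux n a F) atTop = 0 ∧
      ∃ R : ℕ → ℝ, Tendsto R atTop atTop ∧
        Tendsto (fun i => sphereFlux n a F (R i)) atTop (nhds 0) := by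
  classical
  haveI : Nonempty (Fin n) := ⟨⟨0, by omega⟩⟩
  haveI hnontriv : Nontrivial (EuclideanSpace ℝ (Fin n)) := inferInstance
  have hdim : Module.finrank ℝ (EuclideanSpace ℝ (Fin n)) = n := finrank_euclideanSpace_fin
  -- the indicator integrand
  set G : EuclideanSpace ℝ (Fin n) → ℝ≥0∞ := fun x =>
    Set.indicator {x : EuclideanSpace ℝ (Fin n) | 1 ≤ ‖x‖} (fun x => ENNReal.ofReal (F x * ‖x‖ ^ (-(2 * a)))) x
    with hGdef
  have hset : MeasurableSet {x : EuclideanSpace ℝ (Fin n) | 1 ≤ ‖x‖} :=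
    (isClosed_le continuous_const continuous_norm).measurableSet
  have hGmeas : Measurable G :=
    Measurable.indicator
      (ENNReal.measurable_ofReal.comp (hF.mul (measurable_norm.pow measurable_const))) hset
  have hGfin : ∫⁻ x, G x ∂volume < ⊤ := by
    rwa [hGdef, lintegral_indicator hset]
  -- sphere integral notation
  set S : ℝ → ℝ≥0∞ := fun t =>
    ∫⁻ ω : Metric.sphere (0 : EuclideanSpace ℝ (Fin n)) 1, ENNReal.ofReal (F (t • (ω : EuclideanSpace ℝ (Fin n)))) ∂(volume : Measure (EuclideanSpace ℝ (Fin n))).toSphere with hSdef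
  have hflux : ∀ t : ℝ, sphereFlux n a F t
      = ENNReal.ofReal (t ^ ((n : ℝ) - 2 * a)) * S t := fun t => rfl
  -- polar coordinates
  set h := homeomorphUnitSphereProd (EuclideanSpace ℝ (Fin n)) with hhdef
  set f : Metric.sphere (0 : EuclideanSpace ℝ (Fin n)) 1 × Ioi (0 : ℝ) → ℝ≥0∞ := fun p => G ((h.symm p : EuclideanSpace ℝ (Fin n)))
    with hfdef
  have hfmeas : Measurable f :=
    hGmeas.comp (continuous_subtype_val.comp h.symm.continuous).measurable
  have hmp := (volume : Measure (EuclideanSpace ℝ (Fin n))).measurePreserving_homeomorphUnitSphereProd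
  have step1 : ∫⁻ x, G x ∂volume
      = ∫⁻ p, f p ∂((volume : Measure (EuclideanSpace ℝ (Fin n))).toSphere.prod (Measure.volumeIoiPow (Module.finrank ℝ (EuclideanSpace ℝ (Fin n)) - 1))) := by
    have e1 : ∫⁻ (x : ({0}ᶜ : Set (EuclideanSpace ℝ (Fin n)))), f (h x)
          ∂Measure.comap Subtype.val volume
        = ∫⁻ (x : ({0}ᶜ : Set (EuclideanSpace ℝ (Fin n)))), G x.1
          ∂Measure.comap Subtype.val volume :=
      lintegral_congr fun x => by simp [hfdef]
    rw [← hmp.map_eq, lintegral_map hfmeas h.measurable, e1,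
      lintegral_subtype_comap (measurableSet_singleton (0 : EuclideanSpace ℝ (Fin n))).compl,
      restrict_compl_singleton]
  have step2 : ∫⁻ p, f p ∂((volume : Measure (EuclideanSpace ℝ (Fin n))).toSphere.prod (Measure.volumeIoiPow (Module.finrank ℝ (EuclideanSpace ℝ (Fin n)) - 1)))
      = ∫⁻ t in Ioi (0 : ℝ),
          ENNReal.ofReal (t ^ (n - 1)) *
            ∫⁻ ω : Metric.sphere (0 : EuclideanSpace ℝ (Fin n)) 1, G (t • (ω : EuclideanSpace ℝ (Fin n))) ∂(volume : Measure (EuclideanSpace ℝ (Fin n))).toSphere ∂volume := by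
    rw [lintegral_prod_symm' f hfmeas]
    have hΦ : Measurable fun r : Ioi (0 : ℝ) =>
        ∫⁻ ω : Metric.sphere (0 : EuclideanSpace ℝ (Fin n)) 1, f (ω, r) ∂(volume : Measure (EuclideanSpace ℝ (Fin n))).toSphere :=
      hfmeas.lintegral_prod_left'
    rw [Measure.volumeIoiPow, lintegral_withDensity_eq_lintegral_mul _
      ((measurable_subtype_coe.pow_const _).ennreal_ofReal) hΦ]
    have : ∀ r : Ioi (0 : ℝ),
        (ENNReal.ofReal (r.1 ^ (Module.finrank ℝ (EuclideanSpace ℝ (Fin n)) - 1)) *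
          ∫⁻ ω : Metric.sphere (0 : EuclideanSpace ℝ (Fin n)) 1, f (ω, r) ∂(volume : Measure (EuclideanSpace ℝ (Fin n))).toSphere)
        = (fun t : ℝ => ENNReal.ofReal (t ^ (n - 1)) *
            ∫⁻ ω : Metric.sphere (0 : EuclideanSpace ℝ (Fin n)) 1, G (t • (ω : EuclideanSpace ℝ (Fin n))) ∂(volume : Measure (EuclideanSpace ℝ (Fin n))).toSphere) r.1 := by
      intro r
      simp only [hfdef, hhdef, homeomorphUnitSphereProd_symm_apply_coe, hdim]
    calc ∫⁻ r : Ioi (0:ℝ), (fun r ↦ ENNReal.ofReal (r.1 ^ (Module.finrank ℝ (EuclideanSpace ℝ (Fin n)) - 1)) *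
            ∫⁻ ω : Metric.sphere (0 : EuclideanSpace ℝ (Fin n)) 1, f (ω, r) ∂(volume : Measure (EuclideanSpace ℝ (Fin n))).toSphere) r
          ∂(Measure.comap Subtype.val volume)
        = ∫⁻ r : Ioi (0:ℝ), (fun t : ℝ => ENNReal.ofReal (t ^ (n - 1)) *
            ∫⁻ ω : Metric.sphere (0 : EuclideanSpace ℝ (Fin n)) 1, G (t • (ω : EuclideanSpace ℝ (Fin n))) ∂(volume : Measure (EuclideanSpace ℝ (Fin n))).toSphere) r.1
          ∂(Measure.comap Subtype.val volume) := by
          exact lintegral_congr this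
      _ = _ := lintegral_subtype_comap measurableSet_Ioi
        (fun t : ℝ => ENNReal.ofReal (t ^ (n - 1)) *
          ∫⁻ ω : Metric.sphere (0 : EuclideanSpace ℝ (Fin n)) 1,
            G (t • (ω : EuclideanSpace ℝ (Fin n))) ∂(volume : Measure (EuclideanSpace ℝ (Fin n))).toSphere)
  -- pointwise identification on `Ioi 1`
  have hptwise : ∀ t : ℝ, t ∈ Ioi (1 : ℝ) →
      sphereFlux n a F t * ENNReal.ofReal t⁻¹
        = ENNReal.ofReal (t ^ (n - 1)) *
            ∫⁻ ω : Metric.sphere (0 : EuclideanSpace ℝ (Fin n)) 1, G (t • (ω : EuclideanSpace ℝ (Fin n))) ∂(volume : Measure (EuclideanSpace ℝ (Fin n))).toSphere := by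
    intro t ht
    have ht1 : (1 : ℝ) ≤ t := le_of_lt ht
    have ht0 : (0 : ℝ) < t := lt_of_lt_of_le one_pos ht1
    have hnorm : ∀ ω : Metric.sphere (0 : EuclideanSpace ℝ (Fin n)) 1, ‖t • (ω : EuclideanSpace ℝ (Fin n))‖ = t := by
      intro ω
      rw [norm_smul, Real.norm_eq_abs, abs_of_pos ht0,
        mem_sphere_zero_iff_norm.1 ω.2, mul_one]
    have hGval : ∀ ω : Metric.sphere (0 : EuclideanSpace ℝ (Fin n)) 1,
        G (t • (ω : EuclideanSpace ℝ (Fin n))) = ENNReal.ofReal (t ^ (-(2 * a))) *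
          ENNReal.ofReal (F (t • (ω : EuclideanSpace ℝ (Fin n)))) := by
      intro ω
      simp only [hGdef]
      rw [Set.indicator_of_mem (by simp [Set.mem_setOf_eq, hnorm ω, ht1]), hnorm ω,
        mul_comm (F (t • (ω : EuclideanSpace ℝ (Fin n)))), ENNReal.ofReal_mul (Real.rpow_nonneg ht0.le _)]
    have hinner : (∫⁻ ω : Metric.sphere (0 : EuclideanSpace ℝ (Fin n)) 1, G (t • (ω : EuclideanSpace ℝ (Fin n))) ∂(volume : Measure (EuclideanSpace ℝ (Fin n))).toSphere)
        = ENNReal.ofReal (t ^ (-(2 * a))) * S t := by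
      simp_rw [hGval]
      rw [lintegral_const_mul' _ _ ENNReal.ofReal_ne_top]
    rw [hinner, hflux t, mul_right_comm, ← ENNReal.ofReal_mul (Real.rpow_nonneg ht0.le _),
      ← mul_assoc, ← ENNReal.ofReal_mul (pow_nonneg ht0.le _)]
    congr 2
    have hcast : ((n - 1 : ℕ) : ℝ) = (n : ℝ) - 1 := by
      rw [Nat.cast_sub (by omega)]; norm_num
    rw [← Real.rpow_natCast t (n - 1), hcast, ← Real.rpow_neg_one t,
      ← Real.rpow_add ht0, ← Real.rpow_add ht0]
    ring_nf
  -- the key finiteness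
  have key : (∫⁻ t in Ioi (1 : ℝ), sphereFlux n a F t * ENNReal.ofReal t⁻¹) < ⊤ := by
    calc (∫⁻ t in Ioi (1 : ℝ), sphereFlux n a F t * ENNReal.ofReal t⁻¹)
        = ∫⁻ t in Ioi (1 : ℝ), ENNReal.ofReal (t ^ (n - 1)) *
            ∫⁻ ω : Metric.sphere (0 : EuclideanSpace ℝ (Fin n)) 1, G (t • (ω : EuclideanSpace ℝ (Fin n))) ∂(volume : Measure (EuclideanSpace ℝ (Fin n))).toSphere := by
          exact setLIntegral_congr_fun measurableSet_Ioi
            (fun t ht => hptwise t ht)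
      _ ≤ ∫⁻ t in Ioi (0 : ℝ), ENNReal.ofReal (t ^ (n - 1)) *
            ∫⁻ ω : Metric.sphere (0 : EuclideanSpace ℝ (Fin n)) 1, G (t • (ω : EuclideanSpace ℝ (Fin n))) ∂(volume : Measure (EuclideanSpace ℝ (Fin n))).toSphere :=
          lintegral_mono' (Measure.restrict_mono (Ioi_subset_Ioi (by norm_num)) le_rfl) le_rfl
      _ = ∫⁻ x, G x ∂volume := (step1.trans step2).symm
      _ < ⊤ := hGfin
  -- liminf is zero
  have hliminf : liminf (sphereFlux n a F) atTop = 0 := by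
    by_contra hne
    have hpos : 0 < liminf (sphereFlux n a F) atTop := pos_iff_ne_zero.2 hne
    obtain ⟨c, hc0, hclt⟩ := exists_between hpos
    have hev : ∀ᶠ t in atTop, c < sphereFlux n a F t := eventually_lt_of_lt_liminf hclt
    obtain ⟨M, hM⟩ := eventually_atTop.1 hev
    set M' : ℝ := max M 2 with hM'def
    have hM'2 : (2 : ℝ) ≤ M' := le_max_right _ _
    have h1 : (∫⁻ t in Ioi M', c * ENNReal.ofReal t⁻¹)
        ≤ ∫⁻ t in Ioi (1 : ℝ), sphereFlux n a F t * ENNReal.ofReal t⁻¹ := by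
      refine le_trans (lintegral_mono_ae ?_)
        (lintegral_mono' (Measure.restrict_mono (Ioi_subset_Ioi (by linarith)) le_rfl) le_rfl)
      filter_upwards [ae_restrict_mem measurableSet_Ioi] with t ht
      exact mul_le_mul_left (hM t (le_trans (le_max_left _ _) ht.le)).le _
    rw [lintegral_const_mul' c _ hclt.ne_top,
      lintegral_inv_Ioi_eq_top (lt_of_lt_of_le two_pos hM'2),
      ENNReal.mul_top hc0.ne'] at h1
    exact (lt_irrefl ⊤ (lt_of_le_of_lt h1 key)).elim
  refine ⟨hliminf, ?_⟩
  -- extract a sequence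
  have hfreq : ∀ i : ℕ, ∃ r : ℝ, (i : ℝ) ≤ r ∧ sphereFlux n a F r < ((i : ℝ≥0∞))⁻¹ := by
    intro i
    have hb : (0 : ℝ≥0∞) < ((i : ℝ≥0∞))⁻¹ :=
      ENNReal.inv_pos.2 (ENNReal.natCast_ne_top i)
    have := frequently_lt_of_liminf_lt (u := sphereFlux n a F) (f := atTop)
      (h := by rw [hliminf]; exact hb)
    obtain ⟨r, hr1, hr2⟩ := (frequently_atTop.1 this) (i : ℝ)
    exact ⟨r, hr1, hr2⟩
  choose R hR1 hR2 using hfreq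
  refine ⟨R, ?_, ?_⟩
  · exact tendsto_atTop_mono hR1 tendsto_natCast_atTop_atTop
  · refine tendsto_of_tendsto_of_tendsto_of_le_of_le (g := fun _ => (0 : ℝ≥0∞))
      (h := fun i : ℕ => ((i : ℝ≥0∞))⁻¹) tendsto_const_nhds
      ENNReal.tendsto_inv_nat_nhds_zero (fun i => zero_le) (fun i => (hR2 i).le)
end
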